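/- Let d = m² − 1 for a positive integer m, and let F_{d+1} = F_m ⊗ F_m be the Fourier matrix of order d+1 (which factors as a Kronecker product when d+1 = m²), with Lagrange polynomials (ℓ_1(z); …; ℓ_{d+1}(z)) = (1/(d+1)) F_{d+1}^* (1; z). Then the degree-one Lebesgue constant on the complex torus satisfies Λ₁ = max_{z ∈ 𝕋^d} Σ_{j=1}^{d+1} |ℓ_j(z)| = √(d+1). -/

import Mathlib

open Matrix

/-- The Fourier matrix `F_n = [ω^{jk}]_{1 ≤ j,k ≤ n}` of order `n`, where `ω = exp(2πi/n)`. -/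
noncomputable def fourierMatrix (n : ℕ) : Matrix (Fin n) (Fin n) ℂ :=
  Matrix.of fun j k : Fin n =>
    Complex.exp (2 * Real.pi * Complex.I * (((j : ℕ) : ℂ) + 1) * (((k : ℕ) : ℂ) + 1) / n)

open Complex Finset

noncomputable def eC (n : ℕ) (t : ℤ) : ℂ := Complex.exp (2 * Real.pi * Complex.I * t / n)

lemma eC_add (n : ℕ) (a b : ℤ) : eC n (a + b) = eC n a * eC n b := by
  rw [eC, eC, eC, ← Complex.exp_add]
  congr 1
  push_cast
  ring

lemma eC_zero (n : ℕ) : eC n 0 = 1 := by simp [eC]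

lemma abs_eC (n : ℕ) (t : ℤ) : ‖eC n t‖ = 1 := by
  have h : 2 * Real.pi * Complex.I * t / n = ((2 * Real.pi * t / n : ℝ) : ℂ) * Complex.I := by
    push_cast; ring
  rw [eC, h, Complex.norm_exp_ofReal_mul_I]

lemma conj_eC (n : ℕ) (t : ℤ) : (starRingEnd ℂ) (eC n t) = eC n (-t) := by
  rw [eC, eC, ← Complex.exp_conj]
  congr 1
  simp only [map_div₀, _root_.map_mul, Complex.conj_I, Complex.conj_ofReal, map_ofNat,
    map_intCast, map_natCast]
  push_cast
  ring

lemma eC_pow (n : ℕ) (s : ℤ) (j : ℕ) : eC n (s * j) = (eC n s) ^ j := by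
  rw [eC, eC, ← Complex.exp_nat_mul]
  congr 1
  push_cast
  ring

lemma eC_eq_one {n : ℕ} (hn : 0 < n) {t : ℤ} (h : (n : ℤ) ∣ t) : eC n t = 1 := by
  obtain ⟨k, rfl⟩ := h
  rw [eC, Complex.exp_eq_one_iff]
  refine ⟨k, ?_⟩
  have hn' : (n : ℂ) ≠ 0 := Nat.cast_ne_zero.mpr hn.ne'
  field_simp
  push_cast
  ring

lemma eC_ne_one {n : ℕ} (hn : 0 < n) {t : ℤ} (h : ¬ (n : ℤ) ∣ t) : eC n t ≠ 1 := by
  intro hc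
  rw [eC, Complex.exp_eq_one_iff] at hc
  obtain ⟨k, hk⟩ := hc
  apply h
  refine ⟨k, ?_⟩
  have hn' : (n : ℂ) ≠ 0 := Nat.cast_ne_zero.mpr hn.ne'
  have hI : (2 : ℂ) * Real.pi * Complex.I ≠ 0 := by
    simp [Complex.I_ne_zero, Real.pi_ne_zero, Complex.ofReal_ne_zero]
  field_simp at hk
  have h2 : (t : ℂ) = (n : ℂ) * k := by
    apply mul_left_cancel₀ hI
    rw [hk]
  exact_mod_cast h2

lemma eC_sum {n : ℕ} (hn : 0 < n) (s : ℤ) :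
    ∑ j : Fin n, eC n (s * j) = if (n : ℤ) ∣ s then (n : ℂ) else 0 := by
  have h1 : ∀ j : Fin n, eC n (s * j) = (eC n s) ^ (j : ℕ) := fun j => eC_pow n s j
  simp_rw [h1]
  rw [Fin.sum_univ_eq_sum_range]
  by_cases h : (n : ℤ) ∣ s
  · rw [if_pos h]
    simp [eC_eq_one hn h]
  · rw [if_neg h]
    rw [geom_sum_eq (eC_ne_one hn h)]
    have : eC n s ^ n = 1 := by
      rw [← eC_pow, mul_comm]
      exact eC_eq_one hn ⟨s, rfl⟩
    simp [this]




lemma fourier_eC (n : ℕ) (j k : Fin n) :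
    fourierMatrix n j k = eC n (((j : ℤ) + 1) * ((k : ℤ) + 1)) := by
  rw [fourierMatrix, eC]
  simp only [Matrix.of_apply]
  congr 1
  push_cast
  ring

lemma fin_dvd_sub_iff {n : ℕ} (k k' : Fin n) : (n : ℤ) ∣ ((k' : ℤ) - (k : ℤ)) ↔ k = k' := by
  constructor
  · intro h
    have h1 : (k' : ℤ) - (k : ℤ) = 0 := by
      rcases h with ⟨c, hc⟩
      have hk := k.isLt
      have hk' := k'.isLt
      have hcz : c = 0 := by nlinarith [Int.ofNat_lt.mpr hk, Int.ofNat_lt.mpr hk']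
      simp [hcz] at hc; exact hc
    have : (k : ℤ) = (k' : ℤ) := by omega
    exact Fin.ext (by exact_mod_cast this)
  · rintro rfl; simp

lemma fourier_ortho {n : ℕ} (hn : 0 < n) (k k' : Fin n) :
    ∑ j : Fin n, (starRingEnd ℂ) (fourierMatrix n k j) * fourierMatrix n k' j
      = if k = k' then (n : ℂ) else 0 := by
  have h1 : ∀ j : Fin n, (starRingEnd ℂ) (fourierMatrix n k j) * fourierMatrix n k' j
      = eC n ((k' : ℤ) - (k : ℤ)) * eC n (((k' : ℤ) - (k : ℤ)) * (j : ℤ)) := by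
    intro j
    rw [fourier_eC, fourier_eC, conj_eC, ← eC_add, ← eC_add]
    congr 1
    ring
  simp_rw [h1, ← Finset.mul_sum, eC_sum hn, fin_dvd_sub_iff]
  by_cases h : k = k'
  · subst h; simp [eC_zero]
  · simp [h]

lemma sum_abs_sq {n : ℕ} (hn : 0 < n) (v : Fin n → ℂ) (hv : ∀ k, ‖v k‖ = 1) :
    ∑ j : Fin n, (‖((fourierMatrix n)ᴴ *ᵥ v) j‖) ^ 2 = (n : ℝ) ^ 2 := by
  set w := (fourierMatrix n)ᴴ *ᵥ v with hwdef
  have hw : ∀ j, w j = ∑ k : Fin n, (starRingEnd ℂ) (fourierMatrix n k j) * v k := by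
    intro j
    simp [hwdef, Matrix.mulVec, dotProduct, Matrix.conjTranspose_apply]
  have hS : ∑ j : Fin n, w j * (starRingEnd ℂ) (w j) = (n : ℂ) ^ 2 := by
    have expand : ∀ j : Fin n, w j * (starRingEnd ℂ) (w j)
        = ∑ k : Fin n, ∑ k' : Fin n,
          (v k * (starRingEnd ℂ) (v k')) *
            ((starRingEnd ℂ) (fourierMatrix n k j) * fourierMatrix n k' j) := by
      intro j
      rw [hw j, map_sum, Finset.sum_mul_sum]
      refine Finset.sum_congr rfl fun k _ => Finset.sum_congr rfl fun k' _ => ?_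
      simp only [_root_.map_mul, Complex.conj_conj]
      ring
    simp_rw [expand]
    rw [Finset.sum_comm]
    have : ∀ k : Fin n, ∑ j : Fin n, ∑ k' : Fin n,
        (v k * (starRingEnd ℂ) (v k')) *
          ((starRingEnd ℂ) (fourierMatrix n k j) * fourierMatrix n k' j)
        = (n : ℂ) := by
      intro k
      rw [Finset.sum_comm]
      have h2 : ∀ k' : Fin n, ∑ j : Fin n,
          (v k * (starRingEnd ℂ) (v k')) *
            ((starRingEnd ℂ) (fourierMatrix n k j) * fourierMatrix n k' j)
          = (v k * (starRingEnd ℂ) (v k')) * (if k = k' then (n : ℂ) else 0) := by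
        intro k'
        rw [← Finset.mul_sum, fourier_ortho hn]
      simp_rw [h2, mul_ite, mul_zero]
      rw [Finset.sum_ite_eq univ k (fun k' => v k * (starRingEnd ℂ) (v k') * n)]
      simp only [mem_univ, if_true]
      have : v k * (starRingEnd ℂ) (v k) = 1 := by
        rw [Complex.mul_conj, Complex.normSq_eq_norm_sq, hv k]
        norm_num
      rw [this, one_mul]
    simp_rw [this]
    simp only [Finset.sum_const, Finset.card_univ, Fintype.card_fin, nsmul_eq_mul]
    ring
  have habs : ∀ j : Fin n, ((‖w j‖) ^ 2 : ℂ) = w j * (starRingEnd ℂ) (w j) := by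
    intro j
    rw [Complex.mul_conj, Complex.normSq_eq_norm_sq]
    push_cast
    ring
  have : ((∑ j : Fin n, (‖w j‖) ^ 2 : ℝ) : ℂ) = ((n : ℝ) ^ 2 : ℂ) := by
    push_cast
    simp_rw [habs]
    rw [hS]
  exact_mod_cast this

lemma eC_scale (m : ℕ) (hm : 0 < m) (t : ℤ) : eC (m * m) ((m : ℤ) * t) = eC m t := by
  rw [eC, eC]
  congr 1
  have hm' : (m : ℂ) ≠ 0 := Nat.cast_ne_zero.mpr hm.ne'
  field_simp
  push_cast
  ring

/-- Cauchy–Schwarz upper bound. -/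
lemma sum_abs_le {n : ℕ} (hn : 0 < n) (v : Fin n → ℂ) (hv : ∀ k, ‖v k‖ = 1) :
    ∑ j : Fin n, ‖((fourierMatrix n)ᴴ *ᵥ v) j‖ ≤ n * Real.sqrt n := by
  set w := (fourierMatrix n)ᴴ *ᵥ v with hwdef
  set A := ∑ j : Fin n, ‖w j‖ with hA
  have hA0 : 0 ≤ A := Finset.sum_nonneg fun j _ => norm_nonneg _
  have hcs : A ^ 2 ≤ (n : ℝ) ^ 3 := by
    have h1 : A = ∑ j : Fin n, 1 * ‖w j‖ := by simp [hA]
    have h2 := Finset.sum_mul_sq_le_sq_mul_sq Finset.univ (fun _ : Fin n => (1 : ℝ))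
      (fun j => ‖w j‖)
    rw [← h1] at h2
    have h3 : ∑ _j : Fin n, (1 : ℝ) ^ 2 = (n : ℝ) := by simp
    rw [h3, sum_abs_sq hn v hv] at h2
    calc A ^ 2 ≤ (n : ℝ) * (n : ℝ) ^ 2 := h2
    _ = (n : ℝ) ^ 3 := by ring
  have hn0 : (0:ℝ) ≤ (n : ℝ) := Nat.cast_nonneg n
  have hsq : ((n : ℝ) * Real.sqrt n) ^ 2 = (n : ℝ) ^ 3 := by
    rw [mul_pow, Real.sq_sqrt hn0]; ring
  calc A = Real.sqrt (A ^ 2) := (Real.sqrt_sq hA0).symm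
  _ ≤ Real.sqrt (((n:ℝ) * Real.sqrt n) ^ 2) := by
      apply Real.sqrt_le_sqrt; rw [hsq]; exact hcs
  _ = (n : ℝ) * Real.sqrt n := Real.sqrt_sq (by positivity)

/-- The extremal vector. -/
noncomputable def vSpec (n m : ℕ) : Fin n → ℂ :=
  fun k => eC n ((k : ℤ) + (m : ℤ) * (((k : ℕ) / m : ℕ) : ℤ) * (((k : ℕ) % m : ℕ) : ℤ))

lemma vSpec_abs (n m : ℕ) (k : Fin n) : ‖vSpec n m k‖ = 1 := abs_eC _ _

lemma dvd_iff_eq_mod (m : ℕ) (hm : 0 < m) (r : Fin m) (j : ℕ) :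
    (m : ℤ) ∣ ((r : ℤ) - (j : ℤ)) ↔ (r : ℕ) = j % m := by
  constructor
  · intro h
    have h2 : (j : ℤ) % m = (r : ℤ) % m := Int.ModEq.symm (Int.modEq_iff_dvd.mpr (dvd_sub_comm.mp h))
    have h3 : (r : ℤ) % m = (r : ℤ) := Int.emod_eq_of_lt (by positivity) (by exact_mod_cast r.isLt)
    have h4 : (j : ℤ) % m = ((j % m : ℕ) : ℤ) := by push_cast; ring
    have : ((j % m : ℕ) : ℤ) = (r : ℤ) := by rw [← h4, h2, h3]
    exact_mod_cast this.symm
  · intro h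
    have : (r : ℤ) = ((j % m : ℕ) : ℤ) := by exact_mod_cast h
    rw [this]
    have h4 : ((j % m : ℕ) : ℤ) = (j : ℤ) % m := by push_cast; ring
    rw [h4]
    refine ⟨-((j : ℤ) / m), ?_⟩
    rw [Int.emod_def]
    ring

lemma eC_scale' {n m : ℕ} (hm : 0 < m) (h : n = m * m) (t : ℤ) :
    eC n ((m : ℤ) * t) = eC m t := by subst h; exact eC_scale m hm t

lemma star_eC (n : ℕ) (t : ℤ) : star (eC n t) = eC n (-t) := conj_eC n t

lemma wSpec_abs {m d : ℕ} (hm : 0 < m) (hd : d + 1 = m * m) (j : Fin (d + 1)) :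
    ‖((fourierMatrix (d + 1))ᴴ *ᵥ vSpec (d + 1) m) j‖ = m := by
  have hn : 0 < d + 1 := Nat.succ_pos d
  have hw : ((fourierMatrix (d+1))ᴴ *ᵥ vSpec (d+1) m) j
      = ∑ k : Fin (d+1), eC (d+1) (((k : ℤ) + (m : ℤ) * (((k : ℕ) / m : ℕ) : ℤ) * (((k : ℕ) % m : ℕ) : ℤ))
          - ((k : ℤ) + 1) * ((j : ℤ) + 1)) := by
    simp only [Matrix.mulVec, dotProduct, Matrix.conjTranspose_apply]
    refine Finset.sum_congr rfl fun k _ => ?_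
    rw [fourier_eC, star_eC, vSpec, ← eC_add]
    exact congrArg (eC (d+1)) (by ring)
  set e : Fin m × Fin m ≃ Fin (d+1) := finProdFinEquiv.trans (finCongr hd.symm) with he
  have hval : ∀ p : Fin m × Fin m, ((e p : Fin (d+1)) : ℕ) = (p.2 : ℕ) + m * (p.1 : ℕ) := by
    intro p
    simp [he, finProdFinEquiv]
  have hdiv : ∀ p : Fin m × Fin m, (((e p : Fin (d+1)) : ℕ) / m : ℕ) = (p.1 : ℕ) := by
    intro p
    rw [hval p, Nat.add_mul_div_left _ _ hm, Nat.div_eq_of_lt p.2.isLt, Nat.zero_add]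
  have hmod : ∀ p : Fin m × Fin m, (((e p : Fin (d+1)) : ℕ) % m : ℕ) = (p.2 : ℕ) := by
    intro p
    rw [hval p, Nat.add_mul_mod_self_left, Nat.mod_eq_of_lt p.2.isLt]
  rw [hw, ← Equiv.sum_comp e]
  have hterm : ∀ p : Fin m × Fin m,
      eC (d+1) ((((e p : Fin (d+1)) : ℤ) + (m : ℤ) * ((((e p : Fin (d+1)) : ℕ) / m : ℕ) : ℤ)
          * ((((e p : Fin (d+1)) : ℕ) % m : ℕ) : ℤ)) - (((e p : Fin (d+1)) : ℤ) + 1) * ((j : ℤ) + 1))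
      = eC m (((p.2 : ℤ) - (j : ℤ)) * (p.1 : ℤ))
        * eC (d+1) (-(p.2 : ℤ) * (j : ℤ) - (j : ℤ) - 1) := by
    intro p
    rw [← eC_scale' hm hd, ← eC_add]
    congr 1
    have h1 : ((e p : Fin (d+1)) : ℤ) = (p.2 : ℤ) + (m : ℤ) * (p.1 : ℤ) := by
      exact_mod_cast congrArg (Nat.cast : ℕ → ℤ) (hval p)
    rw [hdiv p, hmod p, h1]
    ring
  simp_rw [hterm]
  rw [Fintype.sum_prod_type, Finset.sum_comm]
  have hinner : ∀ r : Fin m,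
      ∑ q : Fin m, eC m (((r : ℤ) - (j : ℤ)) * (q : ℤ)) * eC (d+1) (-(r : ℤ) * (j : ℤ) - (j : ℤ) - 1)
      = eC (d+1) (-(r : ℤ) * (j : ℤ) - (j : ℤ) - 1)
        * (if (m : ℤ) ∣ ((r : ℤ) - (j : ℤ)) then (m : ℂ) else 0) := by
    intro r
    rw [← Finset.sum_mul, eC_sum hm, mul_comm]
  simp_rw [hinner]
  set r₀ : Fin m := ⟨(j : ℕ) % m, Nat.mod_lt _ hm⟩ with hr₀
  rw [Finset.sum_eq_single r₀]
  · rw [if_pos]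
    · rw [norm_mul, abs_eC, one_mul]
      simp
    · rw [dvd_iff_eq_mod m hm]
  · intro r _ hr
    rw [if_neg, mul_zero]
    rw [dvd_iff_eq_mod m hm]
    intro hc
    exact hr (Fin.ext hc)
  · intro h
    exact absurd (Finset.mem_univ r₀) h

/-- The values at `z ∈ ℂ^d` of the degree-one fundamental Lagrange polynomials associated to
the `d+1` points of the torus obtained by deleting the first column of the Fourier matrix
`F_{d+1}`:  `(ℓ_1(z); …; ℓ_{d+1}(z)) = (1/(d+1)) F_{d+1}^* (1; z)`. -/
noncomputable def torusLagrange (d : ℕ) (z : Fin d → ℂ) (i : Fin (d + 1)) : ℂ :=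
  (((d : ℂ) + 1)⁻¹) * ((fourierMatrix (d + 1))ᴴ *ᵥ (Fin.cons 1 z : Fin (d + 1) → ℂ)) i

/-- for `d = m² - 1` with `m` a positive integer (so that the Fourier matrix
`F_{d+1}` factors as the Kronecker product `F_m ⊗ F_m`), the degree-one Lebesgue constant
for the Fourier points on the complex torus satisfies
`Λ₁ = max_{z ∈ 𝕋^d} ∑ⱼ |ℓⱼ(z)| = √(d+1)`. -/

theorem fourier_lebesgue_eq (m d : ℕ) (hm : 0 < m) (hd : d + 1 = m * m) :
    IsGreatest {t : ℝ | ∃ z : Fin d → ℂ, (∀ k, ‖z k‖ = 1) ∧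
        t = ∑ j : Fin (d + 1), ‖torusLagrange d z j‖}
      (Real.sqrt ((d : ℝ) + 1)) := by
  have hn : 0 < d + 1 := Nat.succ_pos d
  have habsfac : ∀ (z : Fin d → ℂ) (j : Fin (d + 1)),
      ‖torusLagrange d z j‖
      = ((d : ℝ) + 1)⁻¹ *
        ‖((fourierMatrix (d + 1))ᴴ *ᵥ (Fin.cons 1 z : Fin (d+1) → ℂ)) j‖ := by
    intro z j
    rw [torusLagrange, norm_mul, norm_inv]
    congr 1
    have h1 : ((d : ℂ) + 1) = ((d + 1 : ℕ) : ℂ) := by push_cast; ring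
    rw [h1, Complex.norm_natCast]
    push_cast; ring
  have hsqrt : Real.sqrt ((d : ℝ) + 1) = (m : ℝ) := by
    have h2 : ((d : ℝ) + 1) = (m : ℝ) * (m : ℝ) := by
      have := congrArg (Nat.cast : ℕ → ℝ) hd
      push_cast at this
      linarith
    rw [h2, Real.sqrt_mul_self (Nat.cast_nonneg m)]
  constructor
  · refine ⟨fun k => vSpec (d + 1) m k.succ, fun k => vSpec_abs _ _ _, ?_⟩
    have hcons : (Fin.cons 1 (fun k => vSpec (d + 1) m k.succ) : Fin (d + 1) → ℂ)
        = vSpec (d + 1) m := by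
      funext i
      refine Fin.cases ?_ (fun k => ?_) i
      · rw [Fin.cons_zero]
        have : vSpec (d + 1) m 0 = 1 := by
          rw [vSpec]
          norm_num [eC_zero]
        rw [this]
      · rw [Fin.cons_succ]
    simp_rw [habsfac, hcons, wSpec_abs hm hd]
    rw [Finset.sum_const, Finset.card_univ, Fintype.card_fin, nsmul_eq_mul, hsqrt]
    have hd1 : ((d : ℝ) + 1) ≠ 0 := by positivity
    field_simp
    norm_num
  · rintro t ⟨z, hz, rfl⟩
    have hv : ∀ k, ‖(Fin.cons 1 z : Fin (d + 1) → ℂ) k‖ = 1 := by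
      intro k
      refine Fin.cases ?_ (fun k => ?_) k
      · rw [Fin.cons_zero]; simp
      · rw [Fin.cons_succ]; exact hz k
    simp_rw [habsfac]
    rw [← Finset.mul_sum]
    have hle := sum_abs_le hn (Fin.cons 1 z) hv
    have hc : ((d : ℝ) + 1) = ((d + 1 : ℕ) : ℝ) := by push_cast; ring
    calc ((d : ℝ) + 1)⁻¹ *
          ∑ j : Fin (d+1), ‖((fourierMatrix (d+1))ᴴ *ᵥ (Fin.cons 1 z : Fin (d+1) → ℂ)) j‖
        ≤ ((d : ℝ) + 1)⁻¹ * (((d + 1 : ℕ) : ℝ) * Real.sqrt ((d + 1 : ℕ) : ℝ)) := by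
          apply mul_le_mul_of_nonneg_left hle (by positivity)
    _ = Real.sqrt ((d : ℝ) + 1) := by
          rw [← hc]
          have hd1 : ((d : ℝ) + 1) ≠ 0 := by positivity
          field_simp
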